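/- Let A = (A_1,…,A_n) and B = (B_1,…,B_m) be commuting tuples of linear operators on a complex vector space V such that A ⊕ B = (A_1,…,A_n,B_1,…,B_m) is a commuting (n+m)-tuple. Fix k ∈ {0,…,n+m} and suppose H_p(A, H_q(B,V)) = 0 for all p ∈ {0,…,n}, q ∈ {0,…,m} with p + q = k. Then H_k(A ⊕ B, V) = 0. -/

import Mathlib

open Filter Topology
namespace KN
variable {V : Type*} [AddCommGroup V] [Module ℂ V]

noncomputable def koszulD {n : ℕ} (A : Fin n → Module.End ℂ V) (k : ℕ) :
    ({s : Finset (Fin n) // s.card = k + 1} → V) →ₗ[ℂ]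
      ({s : Finset (Fin n) // s.card = k} → V) where
  toFun f s := ∑ j ∈ (s : Finset (Fin n))ᶜ.attach,
    ((-1 : ℂ) ^ ((s : Finset (Fin n)).filter (· < (j : Fin n))).card) •
      A (j : Fin n) (f ⟨insert (j : Fin n) (s : Finset (Fin n)), by
        rw [Finset.card_insert_of_notMem (Finset.mem_compl.mp j.2), s.2]⟩)
  map_add' f g := by
    funext s
    simp [Pi.add_apply, map_add, smul_add, Finset.sum_add_distrib]
  map_smul' c f := by
    funext s
    simp only [Pi.smul_apply, map_smul, RingHom.id_apply, Finset.smul_sum]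
    exact Finset.sum_congr rfl fun j _ => smul_comm _ _ _

noncomputable def koszulDDown {n : ℕ} (A : Fin n → Module.End ℂ V) :
    (k : ℕ) → (({s : Finset (Fin n) // s.card = k} → V) →ₗ[ℂ]
      ({s : Finset (Fin n) // s.card = k - 1} → V))
  | 0 => 0
  | (k + 1) => koszulD A k

noncomputable abbrev koszulHomology {n : ℕ} (A : Fin n → Module.End ℂ V) (k : ℕ) :=
  LinearMap.ker (koszulDDown A k) ⧸
    (Submodule.comap (LinearMap.ker (koszulDDown A k)).subtype
      (LinearMap.range (koszulD A k)))


/-- A commuting tuple is Fredholm when all its Koszul homology groups are finite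
dimensional. -/
def KoszulFredholm {n : ℕ} (A : Fin n → Module.End ℂ V) : Prop :=
  ∀ k, FiniteDimensional ℂ (koszulHomology A k)

/-- The index of a Fredholm commuting tuple: minus the Euler characteristic of its
Koszul complex. -/
noncomputable def koszulIndex {n : ℕ} (A : Fin n → Module.End ℂ V) : ℤ :=
  ∑ k ∈ Finset.range (n + 1),
    (-1) ^ (k + 1) * (Module.finrank ℂ (koszulHomology A k) : ℤ)

/-- The tuple `A - λ`. -/
noncomputable def tupleSub {n : ℕ} (A : Fin n → Module.End ℂ V) (lam : Fin n → ℂ) :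
    Fin n → Module.End ℂ V :=
  fun i => A i - algebraMap ℂ (Module.End ℂ V) (lam i)

/-- The tuple `λ - A`. -/
noncomputable def subTuple {n : ℕ} (lam : Fin n → ℂ) (A : Fin n → Module.End ℂ V) :
    Fin n → Module.End ℂ V :=
  fun i => algebraMap ℂ (Module.End ℂ V) (lam i) - A i

/-- The Taylor spectrum of a commuting tuple: those `λ` for which the Koszul complex of
`A - λ` is not exact. -/
def taylorSpectrum {n : ℕ} (A : Fin n → Module.End ℂ V) : Set (Fin n → ℂ) :=
  {lam | ∃ k, Nontrivial (koszulHomology (tupleSub A lam) k)}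

lemma compLeft_koszulD {n : ℕ} (A : Fin n → Module.End ℂ V) (T : Module.End ℂ V)
    (hT : ∀ i, Commute T (A i)) (k : ℕ) :
    (T.compLeft {s : Finset (Fin n) // s.card = k}).comp (koszulD A k)
      = (koszulD A k).comp (T.compLeft _) := by
  have hpt : ∀ (i : Fin n) (y : V), T (A i y) = A i (T y) := fun i y => by
    have h := LinearMap.congr_fun ((hT i).eq) y
    simpa [Module.End.mul_apply] using h
  ext f s
  simp only [LinearMap.comp_apply, LinearMap.compLeft_apply, Function.comp_apply, koszulD,
    LinearMap.coe_mk, AddHom.coe_mk, map_sum, map_smul]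
  exact Finset.sum_congr rfl fun j _ => by rw [hpt]

lemma compLeft_koszulDDown {n : ℕ} (A : Fin n → Module.End ℂ V) (T : Module.End ℂ V)
    (hT : ∀ i, Commute T (A i)) (k : ℕ) :
    (T.compLeft {s : Finset (Fin n) // s.card = k - 1}).comp (koszulDDown A k)
      = (koszulDDown A k).comp (T.compLeft _) := by
  cases k with
  | zero => ext f s; simp [koszulDDown]
  | succ k => exact compLeft_koszulD A T hT k

open Classical in
/-- The endomorphism of Koszul homology induced by an operator `T` commuting with the
tuple `A` (junk value `0` if `T` does not commute with `A`). -/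
noncomputable def koszulInduced {n : ℕ} (A : Fin n → Module.End ℂ V) (T : Module.End ℂ V)
    (k : ℕ) : Module.End ℂ (koszulHomology A k) :=
  if hT : ∀ i, Commute T (A i) then
    Submodule.mapQ _ _
      ((T.compLeft _).restrict (p := LinearMap.ker (koszulDDown A k))
        (q := LinearMap.ker (koszulDDown A k))
        (fun x hx => by
          have h := LinearMap.congr_fun (compLeft_koszulDDown A T hT k) x
          simp only [LinearMap.comp_apply] at h
          simp only [LinearMap.mem_ker] at hx ⊢
          rw [← h, hx, map_zero]))
      (fun x hx => by
        simp only [Submodule.mem_comap, LinearMap.mem_range] at hx ⊢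
        obtain ⟨y, hy⟩ := hx
        refine ⟨(T.compLeft _) y, ?_⟩
        have h := LinearMap.congr_fun (compLeft_koszulD A T hT k) y
        simp only [LinearMap.comp_apply] at h
        rw [← h, hy]
        rfl)
  else 0

/-- The tuple induced by `A` on the Koszul homology of `B`. -/
noncomputable def inducedTuple {n m : ℕ} (B : Fin m → Module.End ℂ V)
    (A : Fin n → Module.End ℂ V) (k : ℕ) : Fin n → Module.End ℂ (koszulHomology B k) :=
  fun i => koszulInduced B (A i) k

/-- The generalized eigenspace of an endomorphism at `μ`: the union of the kernels of the
powers of `T - μ`. -/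
noncomputable def maxGenEig (T : Module.End ℂ V) (mu : ℂ) : Submodule ℂ V :=
  ⨆ k : ℕ, LinearMap.ker ((T - algebraMap ℂ (Module.End ℂ V) mu) ^ k)

/-- The joint generalized eigenspace of a tuple of endomorphisms at `λ`. -/
noncomputable def jointGenEig {n : ℕ} (T : Fin n → Module.End ℂ V) (lam : Fin n → ℂ) :
    Submodule ℂ V :=
  ⨅ i, maxGenEig (T i) (lam i)

/-- The local index at `λ` of a Fredholm commuting tuple `B` (in the intended application
`B = g(A)`) with respect to the "coordinate" tuple `A`: minus the Euler characteristic of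
the joint generalized eigenspaces at `λ`, inside the Koszul homology of `B`, of the tuple
induced by `A`. -/
noncomputable def localIndex {n m : ℕ} (B : Fin m → Module.End ℂ V)
    (A : Fin n → Module.End ℂ V) (lam : Fin n → ℂ) : ℤ :=
  ∑ k ∈ Finset.range (m + 1), (-1) ^ (k + 1) *
    (Module.finrank ℂ (jointGenEig (inducedTuple B A k) lam) : ℤ)

open Classical in
/-- The restriction of an endomorphism to an invariant submodule (junk value `0` if the
submodule is not invariant). -/
noncomputable def restrictEnd (p : Submodule ℂ V) (T : Module.End ℂ V) :
    Module.End ℂ ↥p :=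
  if h : ∀ x ∈ p, T x ∈ p then T.restrict h else 0

/-- The set of common zeroes of a family of functions inside a set `S`. -/
def zeroSetOn {n m : ℕ} (S : Set (Fin n → ℂ)) (g : Fin m → ((Fin n → ℂ) → ℂ)) :
    Set (Fin n → ℂ) :=
  {x ∈ S | ∀ j, g j x = 0}

section Hilbert

variable {H : Type*} [NormedAddCommGroup H] [InnerProductSpace ℂ H] [CompleteSpace H]

/-- The tuple of underlying linear endomorphisms of a tuple of bounded operators. -/
noncomputable def opEnd {n : ℕ} (A : Fin n → (H →L[ℂ] H)) : Fin n → Module.End ℂ H :=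
  fun i => (A i).toLinearMap

/-- The Taylor spectrum of a commuting tuple of bounded operators. -/
def opTaylorSpectrum {n : ℕ} (A : Fin n → (H →L[ℂ] H)) : Set (Fin n → ℂ) :=
  taylorSpectrum (opEnd A)

/-- The essential Taylor spectrum: `λ ∉ Sp_ess(A)` if and only if `A - λ` is Fredholm. -/
def essSpectrum {n : ℕ} (A : Fin n → (H →L[ℂ] H)) : Set (Fin n → ℂ) :=
  {lam | ¬ KoszulFredholm (tupleSub (opEnd A) lam)}

/-- Taylor's holomorphic functional calculus for a commuting tuple `A` of bounded
operators on a Hilbert space, with symbols holomorphic on an open neighbourhood `U` of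
the Taylor spectrum: a unital algebra homomorphism `f ↦ f(A)` into the commutant of `A`,
sending the coordinate functions to the members of `A` and satisfying the spectral
mapping property `Sp(f(A)) = f(Sp(A))` for tuple-valued symbols. -/
structure OpCalculus {n : ℕ} (A : Fin n → (H →L[ℂ] H)) (U : Set (Fin n → ℂ)) :
    Type _ where
  toFun : ((Fin n → ℂ) → ℂ) → (H →L[ℂ] H)
  isOpen_dom : IsOpen U
  spec_sub : opTaylorSpectrum A ⊆ U
  map_one' : toFun 1 = 1
  map_add' : ∀ f g, DifferentiableOn ℂ f U → DifferentiableOn ℂ g U →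
    toFun (f + g) = toFun f + toFun g
  map_mul' : ∀ f g, DifferentiableOn ℂ f U → DifferentiableOn ℂ g U →
    toFun (f * g) = toFun f * toFun g
  map_smul' : ∀ (c : ℂ) f, DifferentiableOn ℂ f U → toFun (c • f) = c • toFun f
  map_coord : ∀ i, toFun (fun z => z i) = A i
  commutes : ∀ f, DifferentiableOn ℂ f U → ∀ i, Commute (A i) (toFun f)
  spectral_mapping : ∀ (m : ℕ) (h : Fin m → ((Fin n → ℂ) → ℂ)),
    (∀ j, DifferentiableOn ℂ (h j) U) →
    opTaylorSpectrum (fun j => toFun (h j)) = (fun z j => h j z) '' opTaylorSpectrum A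

end Hilbert

/-- A holomorphic functional calculus for a commuting tuple of endomorphisms of a complex
vector space (used for tuples acting on finite dimensional homology spaces). -/
structure EndCalculus {n : ℕ} {V : Type*} [AddCommGroup V] [Module ℂ V]
    (A : Fin n → Module.End ℂ V) (U : Set (Fin n → ℂ)) : Type _ where
  toFun : ((Fin n → ℂ) → ℂ) → Module.End ℂ V
  isOpen_dom : IsOpen U
  spec_sub : taylorSpectrum A ⊆ U
  map_one' : toFun 1 = 1
  map_add' : ∀ f g, DifferentiableOn ℂ f U → DifferentiableOn ℂ g U →
    toFun (f + g) = toFun f + toFun g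
  map_mul' : ∀ f g, DifferentiableOn ℂ f U → DifferentiableOn ℂ g U →
    toFun (f * g) = toFun f * toFun g
  map_smul' : ∀ (c : ℂ) f, DifferentiableOn ℂ f U → toFun (c • f) = c • toFun f
  map_coord : ∀ i, toFun (fun z => z i) = A i
  commutes : ∀ f, DifferentiableOn ℂ f U → ∀ i, Commute (A i) (toFun f)
  spectral_mapping : ∀ (m : ℕ) (h : Fin m → ((Fin n → ℂ) → ℂ)),
    (∀ j, DifferentiableOn ℂ (h j) U) →
    taylorSpectrum (fun j => toFun (h j)) = (fun z j => h j z) '' taylorSpectrum A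



noncomputable instance germAlgebra {α : Type*} {l : Filter α} : Algebra ℂ (Filter.Germ l ℂ) :=
  Algebra.ofModule
    (fun c x y => by
      refine Filter.Germ.inductionOn₂ x y fun f g => ?_
      simp only [← Filter.Germ.coe_smul, ← Filter.Germ.coe_mul, smul_mul_assoc])
    (fun c x y => by
      refine Filter.Germ.inductionOn₂ x y fun f g => ?_
      simp only [← Filter.Germ.coe_smul, ← Filter.Germ.coe_mul, mul_smul_comm])

/-- The ring of germs at `x` of analytic functions: the subalgebra of the ring of germs
of functions at `x` consisting of germs having an analytic representative. -/
noncomputable def analyticGermsAt {n : ℕ} (x : Fin n → ℂ) :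
    Subalgebra ℂ (Filter.Germ (𝓝 x) ℂ) where
  carrier := {φ | ∃ f : (Fin n → ℂ) → ℂ, AnalyticAt ℂ f x ∧ φ = ↑f}
  mul_mem' := by
    rintro a b ⟨f, hf, rfl⟩ ⟨g, hg, rfl⟩
    exact ⟨f * g, hf.mul hg, rfl⟩
  add_mem' := by
    rintro a b ⟨f, hf, rfl⟩ ⟨g, hg, rfl⟩
    exact ⟨f + g, hf.add hg, rfl⟩
  algebraMap_mem' := fun c => ⟨fun _ => c, analyticAt_const, by
    rw [Algebra.algebraMap_eq_smul_one, ← Filter.Germ.coe_one (l := 𝓝 x),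
      ← Filter.Germ.coe_smul]
    congr 1
    funext z
    simp⟩

/-- The local degree (intersection multiplicity) at `x` of an `n`-tuple `g` of functions
of `n` complex variables: the dimension of the quotient of the ring of germs of analytic
functions at `x` by the ideal generated by the germs of the components of `g`. -/
noncomputable def localDegree {n : ℕ} (g : Fin n → ((Fin n → ℂ) → ℂ)) (x : Fin n → ℂ) : ℕ :=
  Module.finrank ℂ
    (↥(analyticGermsAt x) ⧸ Ideal.span
      {y : ↥(analyticGermsAt x) | ∃ i, (y : Filter.Germ (𝓝 x) ℂ) = ↑(g i)})


/-- The ring `O(S)` of germs of holomorphic functions on (open neighbourhoods of) a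
compact set `S`: the subalgebra of the ring of germs of functions along the neighbourhood
filter of `S` consisting of germs having a representative holomorphic on an open
neighbourhood of `S`. -/
noncomputable def holGermsOn {n : ℕ} (S : Set (Fin n → ℂ)) :
    Subalgebra ℂ (Filter.Germ (𝓝ˢ S) ℂ) where
  carrier := {φ | ∃ f : (Fin n → ℂ) → ℂ, ∃ U : Set (Fin n → ℂ),
    IsOpen U ∧ S ⊆ U ∧ DifferentiableOn ℂ f U ∧ φ = ↑f}
  mul_mem' := by
    rintro a b ⟨f, U, hU, hSU, hf, rfl⟩ ⟨g, W, hW, hSW, hg, rfl⟩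
    exact ⟨f * g, U ∩ W, hU.inter hW, Set.subset_inter hSU hSW,
      (hf.mono Set.inter_subset_left).mul (hg.mono Set.inter_subset_right), rfl⟩
  add_mem' := by
    rintro a b ⟨f, U, hU, hSU, hf, rfl⟩ ⟨g, W, hW, hSW, hg, rfl⟩
    exact ⟨f + g, U ∩ W, hU.inter hW, Set.subset_inter hSU hSW,
      (hf.mono Set.inter_subset_left).add (hg.mono Set.inter_subset_right), rfl⟩
  algebraMap_mem' := fun c => ⟨fun _ => c, Set.univ, isOpen_univ, Set.subset_univ _,
    (differentiable_const c).differentiableOn, by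
      rw [Algebra.algebraMap_eq_smul_one, ← Filter.Germ.coe_one (l := 𝓝ˢ S),
        ← Filter.Germ.coe_smul]
      congr 1
      funext z
      simp⟩

/-- Evaluation of a germ along the neighbourhood filter of `S` at a point of `S`. -/
noncomputable def germValue {n : ℕ} {S : Set (Fin n → ℂ)} {x : Fin n → ℂ} (hx : x ∈ S)
    (φ : Filter.Germ (𝓝ˢ S) ℂ) : ℂ :=
  Filter.Germ.liftOn φ (fun f => f x) fun _f _g hfg => subset_of_mem_nhdsSet hfg hx

@[simp] lemma germValue_coe {n : ℕ} {S : Set (Fin n → ℂ)} {x : Fin n → ℂ} (hx : x ∈ S)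
    (f : (Fin n → ℂ) → ℂ) : germValue hx (↑f) = f x := rfl

lemma germValue_mul {n : ℕ} {S : Set (Fin n → ℂ)} {x : Fin n → ℂ} (hx : x ∈ S)
    (φ ψ : Filter.Germ (𝓝ˢ S) ℂ) :
    germValue hx (φ * ψ) = germValue hx φ * germValue hx ψ :=
  Filter.Germ.inductionOn₂ φ ψ fun _f _g => rfl

lemma germValue_one {n : ℕ} {S : Set (Fin n → ℂ)} {x : Fin n → ℂ} (hx : x ∈ S) :
    germValue hx (1 : Filter.Germ (𝓝ˢ S) ℂ) = 1 := rfl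

/-- The multiplicative set of germs of holomorphic functions not vanishing at a given
point `x ∈ S`; the complement of the prime ideal `p_x`. -/
noncomputable def nonvanishingGerms {n : ℕ} (S : Set (Fin n → ℂ)) {x : Fin n → ℂ}
    (hx : x ∈ S) : Submonoid ↥(holGermsOn S) where
  carrier := {f | germValue hx (f : Filter.Germ (𝓝ˢ S) ℂ) ≠ 0}
  one_mem' := by
    simp only [Set.mem_setOf_eq, OneMemClass.coe_one, germValue_one hx]
    exact one_ne_zero
  mul_mem' := by
    intro a b ha hb
    simp only [Set.mem_setOf_eq, MulMemClass.coe_mul, germValue_mul hx] at *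
    exact mul_ne_zero ha hb

lemma coord_mem_holGermsOn {n : ℕ} (S : Set (Fin n → ℂ)) (i : Fin n) :
    (↑(fun z : Fin n → ℂ => z i) : Filter.Germ (𝓝ˢ S) ℂ) ∈ holGermsOn S :=
  ⟨fun z => z i, Set.univ, isOpen_univ, Set.subset_univ _,
    ((ContinuousLinearMap.proj (R := ℂ) (φ := fun _ : Fin n => ℂ)
      i).differentiable).differentiableOn, rfl⟩

/-- Scalar multiplication by a ring element as a `ℂ`-linear endomorphism of a module over
a commutative `ℂ`-algebra. -/
noncomputable def smulEnd {R : Type*} [CommRing R] [Algebra ℂ R] {L : Type*}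
    [AddCommGroup L] [Module ℂ L] [Module R L] [IsScalarTower ℂ R L] (r : R) :
    Module.End ℂ L where
  toFun x := r • x
  map_add' := smul_add r
  map_smul' c x := by
    show r • (c • x) = c • (r • x)
    rw [← algebraMap_smul R c x, ← algebraMap_smul R c (r • x), smul_smul, smul_smul,
      mul_comm]


/-- Taylor's holomorphic functional calculus for a commuting tuple of bounded operators,
as a unital algebra homomorphism defined on the ring of germs of holomorphic functions on
neighbourhoods of the Taylor spectrum, sending coordinate germs to the members of the
tuple and satisfying the spectral mapping property. -/
structure GermCalculus {n : ℕ} {H : Type*} [NormedAddCommGroup H]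
    [InnerProductSpace ℂ H] [CompleteSpace H] (A : Fin n → (H →L[ℂ] H)) : Type _ where
  toFun : ↥(holGermsOn (opTaylorSpectrum A)) → (H →L[ℂ] H)
  map_one' : toFun 1 = 1
  map_add' : ∀ f g, toFun (f + g) = toFun f + toFun g
  map_mul' : ∀ f g, toFun (f * g) = toFun f * toFun g
  map_algebraMap' : ∀ c : ℂ, toFun (algebraMap ℂ _ c) = algebraMap ℂ _ c
  map_coord : ∀ i, toFun ⟨_, coord_mem_holGermsOn (opTaylorSpectrum A) i⟩ = A i
  commutes : ∀ f i, Commute (A i) (toFun f)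
  spectral_mapping : ∀ (m : ℕ) (h : Fin m → ↥(holGermsOn (opTaylorSpectrum A))),
    opTaylorSpectrum (fun j => toFun (h j)) =
      {mu | ∃ x, ∃ hx : x ∈ opTaylorSpectrum A,
        ∀ j, germValue hx ((h j : Filter.Germ (𝓝ˢ (opTaylorSpectrum A)) ℂ)) = mu j}

variable {n m : ℕ}

/-- Join of a subset of `Fin n` and a subset of `Fin m` into a subset of `Fin (n+m)`. -/
def joinF (s : Finset (Fin n)) (t : Finset (Fin m)) : Finset (Fin (n + m)) :=
  s.map (Fin.castAddEmb m) ∪ t.map (Fin.natAddEmb n)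

lemma castAdd_ne_natAdd (j : Fin n) (i : Fin m) :
    Fin.castAdd m j ≠ Fin.natAdd n i := by
  have := j.isLt
  simp [Fin.ext_iff]; omega

lemma castAdd_mem_joinF {s : Finset (Fin n)} {t : Finset (Fin m)} (j : Fin n) :
    Fin.castAdd m j ∈ joinF s t ↔ j ∈ s := by
  simp only [joinF, Finset.mem_union, Finset.mem_map]
  constructor
  · rintro (⟨a, ha, h⟩ | ⟨a, ha, h⟩)
    · rw [show a = j from Fin.castAdd_injective _ _ h] at ha; exact ha
    · exact absurd h.symm (castAdd_ne_natAdd j a)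
  · exact fun h => Or.inl ⟨j, h, rfl⟩

lemma natAdd_mem_joinF {s : Finset (Fin n)} {t : Finset (Fin m)} (i : Fin m) :
    Fin.natAdd n i ∈ joinF s t ↔ i ∈ t := by
  simp only [joinF, Finset.mem_union, Finset.mem_map]
  constructor
  · rintro (⟨a, ha, h⟩ | ⟨a, ha, h⟩)
    · exact absurd h (castAdd_ne_natAdd a i)
    · rw [show a = i from (Fin.natAddEmb n).injective h] at ha; exact ha
  · exact fun h => Or.inr ⟨i, h, rfl⟩

lemma disjoint_maps (s : Finset (Fin n)) (t : Finset (Fin m)) :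
    Disjoint (s.map (Fin.castAddEmb m)) (t.map (Fin.natAddEmb n)) := by
  rw [Finset.disjoint_left]
  rintro a ha hb
  simp only [Finset.mem_map] at ha hb
  obtain ⟨x, -, rfl⟩ := ha
  obtain ⟨y, -, h⟩ := hb
  exact castAdd_ne_natAdd x y h.symm

lemma card_joinF (s : Finset (Fin n)) (t : Finset (Fin m)) :
    (joinF s t).card = s.card + t.card := by
  rw [joinF, Finset.card_union_of_disjoint (disjoint_maps s t), Finset.card_map,
    Finset.card_map]

lemma sum_joinF {M : Type*} [AddCommMonoid M] (s : Finset (Fin n)) (t : Finset (Fin m))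
    (g : Fin (n + m) → M) :
    ∑ j ∈ joinF s t, g j = (∑ j ∈ s, g (Fin.castAdd m j)) + ∑ j ∈ t, g (Fin.natAdd n j) := by
  rw [joinF, Finset.sum_union (disjoint_maps s t), Finset.sum_map, Finset.sum_map]; rfl

/-- The part of a subset of `Fin (n+m)` lying below `n`. -/
noncomputable def lowerF (u : Finset (Fin (n + m))) : Finset (Fin n) :=
  u.preimage (Fin.castAdd m) ((Fin.castAddEmb m).injective.injOn)

/-- The part of a subset of `Fin (n+m)` lying above `n`. -/
noncomputable def upperF (u : Finset (Fin (n + m))) : Finset (Fin m) :=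
  u.preimage (Fin.natAdd n) ((Fin.natAddEmb n).injective.injOn)

@[simp] lemma mem_lowerF {u : Finset (Fin (n + m))} {j : Fin n} :
    j ∈ lowerF u ↔ Fin.castAdd m j ∈ u := Finset.mem_preimage

@[simp] lemma mem_upperF {u : Finset (Fin (n + m))} {i : Fin m} :
    i ∈ upperF u ↔ Fin.natAdd n i ∈ u := Finset.mem_preimage

lemma joinF_lowerF_upperF (u : Finset (Fin (n + m))) :
    joinF (lowerF u) (upperF u) = u := by
  ext j
  refine Fin.addCases (fun j0 => ?_) (fun i0 => ?_) j
  · rw [castAdd_mem_joinF, mem_lowerF]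
  · rw [natAdd_mem_joinF, mem_upperF]

@[simp] lemma lowerF_joinF (s : Finset (Fin n)) (t : Finset (Fin m)) :
    lowerF (joinF s t) = s := by
  ext j; rw [mem_lowerF, castAdd_mem_joinF]

@[simp] lemma upperF_joinF (s : Finset (Fin n)) (t : Finset (Fin m)) :
    upperF (joinF s t) = t := by
  ext j; rw [mem_upperF, natAdd_mem_joinF]

lemma compl_joinF (s : Finset (Fin n)) (t : Finset (Fin m)) :
    (joinF s t)ᶜ = joinF sᶜ tᶜ := by
  ext j
  refine Fin.addCases (fun j0 => ?_) (fun i0 => ?_) j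
  · rw [Finset.mem_compl, castAdd_mem_joinF, castAdd_mem_joinF, Finset.mem_compl]
  · rw [Finset.mem_compl, natAdd_mem_joinF, natAdd_mem_joinF, Finset.mem_compl]

lemma insert_castAdd_joinF (j : Fin n) (s : Finset (Fin n)) (t : Finset (Fin m)) :
    insert (Fin.castAdd m j) (joinF s t) = joinF (insert j s) t := by
  show _ = (insert j s).map (Fin.castAddEmb m) ∪ _
  rw [Finset.map_insert, Finset.insert_union]
  rfl

lemma insert_natAdd_joinF (i : Fin m) (s : Finset (Fin n)) (t : Finset (Fin m)) :
    insert (Fin.natAdd n i) (joinF s t) = joinF s (insert i t) := by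
  show _ = _ ∪ (insert i t).map (Fin.natAddEmb n)
  rw [Finset.map_insert, Finset.union_insert]
  rfl

lemma lt_castAdd_iff (a j : Fin n) : Fin.castAdd m a < Fin.castAdd m j ↔ a < j := by
  simp only [Fin.lt_iff_val_lt_val, Fin.coe_castAdd]

lemma not_natAdd_lt_castAdd (a : Fin m) (j : Fin n) :
    ¬ (Fin.natAdd n a < Fin.castAdd m j) := by
  have := j.isLt
  simp only [Fin.lt_iff_val_lt_val, Fin.coe_natAdd, Fin.coe_castAdd]
  omega

lemma castAdd_lt_natAdd (a : Fin n) (j : Fin m) :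
    Fin.castAdd m a < Fin.natAdd n j := by
  have := a.isLt
  simp only [Fin.lt_iff_val_lt_val, Fin.coe_natAdd, Fin.coe_castAdd]
  omega

lemma lt_natAdd_iff (a j : Fin m) : Fin.natAdd n a < Fin.natAdd n j ↔ a < j := by
  simp only [Fin.lt_iff_val_lt_val, Fin.coe_natAdd]
  omega

lemma signA_card (j : Fin n) (s : Finset (Fin n)) (t : Finset (Fin m)) :
    ((joinF s t).filter (· < Fin.castAdd m j)).card = (s.filter (· < j)).card := by
  have key : (joinF s t).filter (· < Fin.castAdd m j) = joinF (s.filter (· < j)) ∅ := by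
    ext a
    refine Fin.addCases (fun a0 => ?_) (fun a0 => ?_) a
    · simp [Finset.mem_filter, castAdd_mem_joinF, lt_castAdd_iff]
    · simp [Finset.mem_filter, natAdd_mem_joinF, not_natAdd_lt_castAdd]
  rw [key, card_joinF, Finset.card_empty, add_zero]

lemma signB_card (i : Fin m) (s : Finset (Fin n)) (t : Finset (Fin m)) :
    ((joinF s t).filter (· < Fin.natAdd n i)).card = s.card + (t.filter (· < i)).card := by
  have key : (joinF s t).filter (· < Fin.natAdd n i) = joinF s (t.filter (· < i)) := by
    ext a
    refine Fin.addCases (fun a0 => ?_) (fun a0 => ?_) a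
    · simp [Finset.mem_filter, castAdd_mem_joinF, castAdd_lt_natAdd]
    · simp [Finset.mem_filter, natAdd_mem_joinF, lt_natAdd_iff]
  rw [key, card_joinF]

lemma lowerF_card_le (u : Finset (Fin (n + m))) : (lowerF u).card ≤ n := by
  simpa using Finset.card_le_card (Finset.subset_univ (lowerF u))

lemma card_eq_lower_add_upper (u : Finset (Fin (n + m))) :
    u.card = (lowerF u).card + (upperF u).card := by
  conv_lhs => rw [← joinF_lowerF_upperF u]
  exact card_joinF _ _


section Eval

lemma attach_sum_eq {α M : Type*} [AddCommMonoid M] (S : Finset α)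
    (F : {x // x ∈ S} → M) (G : α → M) (h : ∀ x : {x // x ∈ S}, F x = G x.val) :
    ∑ x ∈ S.attach, F x = ∑ x ∈ S, G x := by
  rw [Finset.sum_congr rfl (fun x _ => h x), Finset.sum_attach]

variable {V : Type*} [AddCommGroup V] [Module ℂ V]
variable (A : Fin n → Module.End ℂ V) (B : Fin m → Module.End ℂ V)

lemma koszulD_append_joinF {p q K : ℕ} (hK : p + q = K)
    (f : {u : Finset (Fin (n + m)) // u.card = K + 1} → V)
    (s : Finset (Fin n)) (t : Finset (Fin m)) (hs : s.card = p) (ht : t.card = q) :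
    koszulD (Fin.append A B) K f ⟨joinF s t, by rw [card_joinF, hs, ht, hK]⟩
      = (∑ j ∈ sᶜ.attach, ((-1 : ℂ) ^ (s.filter (· < (j : Fin n))).card) •
          A (j : Fin n) (f ⟨joinF (insert (j : Fin n) s) t, by
            rw [card_joinF, Finset.card_insert_of_notMem (Finset.mem_compl.mp j.2),
              hs, ht]; omega⟩))
        + (-1 : ℂ) ^ p • ∑ j ∈ tᶜ.attach,
            ((-1 : ℂ) ^ (t.filter (· < (j : Fin m))).card) •
          B (j : Fin m) (f ⟨joinF s (insert (j : Fin m) t), by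
            rw [card_joinF, Finset.card_insert_of_notMem (Finset.mem_compl.mp j.2),
              hs, ht]; omega⟩) := by
  classical
  set U : Finset (Fin (n + m)) := joinF s t with hU
  have hUcard : U.card = K := by rw [hU, card_joinF, hs, ht, hK]
  set g : Fin (n + m) → V := fun j =>
    if hj : j ∈ Uᶜ then
      ((-1 : ℂ) ^ (U.filter (· < j)).card) • (Fin.append A B j)
        (f ⟨insert j U, by
          rw [Finset.card_insert_of_notMem (Finset.mem_compl.mp hj), hUcard]⟩)
    else 0 with hg
  have step1 : koszulD (Fin.append A B) K f ⟨U, hUcard⟩ = ∑ j ∈ Uᶜ, g j := by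
    refine attach_sum_eq _ _ _ (fun x => ?_)
    rw [hg]; beta_reduce
    rw [dif_pos (show ((x : Fin (n + m)) ∈ Uᶜ) from x.2)]
  rw [step1, compl_joinF, sum_joinF]
  congr 1
  · refine (attach_sum_eq _ _ _ (fun x => ?_)).symm
    have hx : Fin.castAdd m (x : Fin n) ∈ Uᶜ := by
      rw [Finset.mem_compl, hU, castAdd_mem_joinF]
      exact Finset.mem_compl.mp x.2
    rw [hg]; beta_reduce
    rw [dif_pos hx]
    have hins : (⟨insert (Fin.castAdd m (x : Fin n)) U, by
        rw [Finset.card_insert_of_notMem (Finset.mem_compl.mp hx), hUcard]⟩ :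
          {u : Finset (Fin (n + m)) // u.card = K + 1})
        = ⟨joinF (insert (x : Fin n) s) t, by
            rw [card_joinF, Finset.card_insert_of_notMem (Finset.mem_compl.mp x.2),
              hs, ht]; omega⟩ := by
      exact Subtype.ext (insert_castAdd_joinF _ _ _)
    rw [hins, Fin.append_left]
    congr 2
    rw [hU, signA_card]
  · rw [Finset.smul_sum]
    refine (attach_sum_eq _ _ _ (fun x => ?_)).symm
    have hx : Fin.natAdd n (x : Fin m) ∈ Uᶜ := by
      rw [Finset.mem_compl, hU, natAdd_mem_joinF]
      exact Finset.mem_compl.mp x.2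
    rw [hg]; beta_reduce
    rw [dif_pos hx]
    have hins : (⟨insert (Fin.natAdd n (x : Fin m)) U, by
        rw [Finset.card_insert_of_notMem (Finset.mem_compl.mp hx), hUcard]⟩ :
          {u : Finset (Fin (n + m)) // u.card = K + 1})
        = ⟨joinF s (insert (x : Fin m) t), by
            rw [card_joinF, Finset.card_insert_of_notMem (Finset.mem_compl.mp x.2),
              hs, ht]; omega⟩ := by
      exact Subtype.ext (insert_natAdd_joinF _ _ _)
    rw [hins, Fin.append_right]
    rw [smul_smul]
    congr 1
    rw [hU, signB_card, hs, pow_add]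

end Eval


section DSquared

variable {V : Type*} [AddCommGroup V] [Module ℂ V]

lemma koszulD_apply {N k : ℕ} (C : Fin N → Module.End ℂ V)
    (f : {s : Finset (Fin N) // s.card = k + 1} → V) (sc : {s : Finset (Fin N) // s.card = k}) :
    koszulD C k f sc = ∑ j ∈ (sc : Finset (Fin N))ᶜ.attach,
      ((-1 : ℂ) ^ ((sc : Finset (Fin N)).filter (· < (j : Fin N))).card) •
        C (j : Fin N) (f ⟨insert (j : Fin N) (sc : Finset (Fin N)), by
          rw [Finset.card_insert_of_notMem (Finset.mem_compl.mp j.2), sc.2]⟩) := rfl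

lemma eps_insert {N : ℕ} {s : Finset (Fin N)} {j : Fin N} (h : j ∉ s) (i : Fin N) :
    ((insert j s).filter (· < i)).card
      = (s.filter (· < i)).card + (if j < i then 1 else 0) := by
  classical
  rw [Finset.filter_insert]
  split
  · rw [Finset.card_insert_of_notMem (fun hmem => h (Finset.mem_of_mem_filter _ hmem))]
  · rw [add_zero]

lemma koszulD_sq {N : ℕ} (C : Fin N → Module.End ℂ V)
    (hC : ∀ i j, Commute (C i) (C j)) (k : ℕ)
    (g : {u : Finset (Fin N) // u.card = k + 1 + 1} → V) :
    koszulD C k (koszulD C (k + 1) g) = 0 := by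
  classical
  funext sc
  obtain ⟨s, hs⟩ := sc
  set G : Finset (Fin N) → V := fun u => if h : u.card = k + 1 + 1 then g ⟨u, h⟩ else 0
    with hG
  set T : Fin N → Fin N → V := fun j i =>
    if j ∈ sᶜ ∧ i ∈ (insert j s)ᶜ then
      (((-1 : ℂ) ^ (s.filter (· < j)).card)
        * ((-1 : ℂ) ^ ((insert j s).filter (· < i)).card)) •
        (C j) ((C i) (G (insert i (insert j s)))) else 0 with hT
  have inner : ∀ (j : Fin N), j ∈ sᶜ → ∀ (pf : (insert j s).card = k + 1 + 1 - 1),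
      koszulD C (k + 1) g ⟨insert j s, pf⟩
        = ∑ i, (if i ∈ (insert j s)ᶜ then
            ((-1 : ℂ) ^ ((insert j s).filter (· < i)).card) •
              (C i) (G (insert i (insert j s))) else 0) := by
    intro j hj pf
    rw [koszulD_apply]
    rw [Finset.sum_ite_mem, Finset.univ_inter]
    refine attach_sum_eq _ _ _ (fun x => ?_)
    have hcards : (insert (x : Fin N) (insert j s)).card = k + 1 + 1 := by
      rw [Finset.card_insert_of_notMem (Finset.mem_compl.mp x.2), pf]
      omega
    rw [hG]; beta_reduce
    rw [dif_pos hcards]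
  have key : koszulD C k ((koszulD C (k + 1)) g) ⟨s, hs⟩ = ∑ j, ∑ i, T j i := by
    rw [koszulD_apply]
    rw [show (∑ j, ∑ i, T j i) = ∑ j ∈ sᶜ, ∑ i, T j i by
      refine (Finset.sum_subset (Finset.subset_univ _) (fun x _ hx => ?_)).symm
      refine Finset.sum_eq_zero (fun i _ => ?_)
      rw [hT]; beta_reduce
      rw [if_neg (fun hcond => hx hcond.1)]]
    refine attach_sum_eq _ _ _ (fun x => ?_)
    rw [inner (x : Fin N) x.2, map_sum, Finset.smul_sum]
    refine Finset.sum_congr rfl (fun i _ => ?_)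
    rw [hT]; beta_reduce
    split
    next hmem =>
      rw [if_pos ⟨x.2, hmem⟩, map_smul, smul_smul]
    next hmem =>
      rw [if_neg (fun hcond => hmem hcond.2), map_zero, smul_zero]
  rw [key, ← Finset.sum_product']
  show (∑ x ∈ Finset.univ ×ˢ Finset.univ, T x.1 x.2) = (0 : V)
  refine Finset.sum_involution (fun a _ => (a.2, a.1)) (fun a _ => ?_) ?_
    (fun a ha => Finset.mem_product.mpr ⟨Finset.mem_univ _, Finset.mem_univ _⟩)
    (fun a ha => rfl)
  · -- cancellation : T a.1 a.2 + T a.2 a.1 = 0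
    obtain ⟨j, i⟩ := a
    show T j i + T i j = 0
    by_cases hji : j = i
    · subst hji
      have : T j j = 0 := by
        rw [hT]; beta_reduce
        rw [if_neg]
        rintro ⟨-, hcon⟩
        exact (Finset.mem_compl.mp hcon) (Finset.mem_insert_self j s)
      rw [this, add_zero]
    by_cases hcond : j ∈ sᶜ ∧ i ∈ (insert j s)ᶜ
    · have hjs : j ∉ s := Finset.mem_compl.mp hcond.1
      have his : i ∉ s := fun h => (Finset.mem_compl.mp hcond.2)
        (Finset.mem_insert_of_mem h)
      have hcond' : i ∈ sᶜ ∧ j ∈ (insert i s)ᶜ := by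
        refine ⟨Finset.mem_compl.mpr his, Finset.mem_compl.mpr ?_⟩
        intro hmem
        rcases Finset.mem_insert.mp hmem with h | h
        · exact hji h
        · exact hjs h
      rw [hT]; beta_reduce
      rw [if_pos hcond, if_pos hcond']
      have hvec : (C i) ((C j) (G (insert j (insert i s))))
          = (C j) ((C i) (G (insert i (insert j s)))) := by
        rw [Finset.insert_comm]
        exact LinearMap.congr_fun (hC i j).eq _
      rw [hvec, ← add_smul]
      rw [eps_insert hjs i, eps_insert his j]
      have hij' : i ≠ j := fun h => hji h.symm
      rcases lt_or_gt_of_ne (fun h : j = i => hji h) with hlt | hgt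
      · rw [if_pos hlt, if_neg (asymm hlt), add_zero, pow_add, pow_one]
        ring_nf
        rw [zero_smul]
      · rw [if_neg (asymm hgt), if_pos hgt, add_zero, pow_add, pow_one]
        ring_nf
        rw [zero_smul]
    · have hcond' : ¬ (i ∈ sᶜ ∧ j ∈ (insert i s)ᶜ) := by
        intro h
        refine hcond ⟨Finset.mem_compl.mpr (fun hj => (Finset.mem_compl.mp h.2)
          (Finset.mem_insert_of_mem hj)), Finset.mem_compl.mpr ?_⟩
        intro hmem
        rcases Finset.mem_insert.mp hmem with h2 | h2
        · exact hji h2.symm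
        · exact (Finset.mem_compl.mp h.1) h2
      rw [hT]; beta_reduce
      rw [if_neg hcond, if_neg hcond', add_zero]
  · -- g_ne
    rintro ⟨j, i⟩ ha hne hcontra
    have hji : i = j := congrArg Prod.fst hcontra
    subst hji
    apply hne
    rw [hT]; beta_reduce
    rw [if_neg]
    rintro ⟨-, hcon⟩
    exact (Finset.mem_compl.mp hcon) (Finset.mem_insert_self i s)

end DSquared



section Homology
variable {n m : ℕ} (A : Fin n → Module.End ℂ V) (B : Fin m → Module.End ℂ V)

/-- The quotiented submodule in the definition of Koszul homology. -/
noncomputable abbrev QB (q : ℕ) : Submodule ℂ (LinearMap.ker (koszulDDown B q)) :=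
  Submodule.comap (LinearMap.ker (koszulDDown B q)).subtype (LinearMap.range (koszulD B q))

lemma mkQ_eq_zero_of_range {q : ℕ} (v : LinearMap.ker (koszulDDown B q))
    (h : (v : {t : Finset (Fin m) // t.card = q} → V) ∈ LinearMap.range (koszulD B q)) :
    (QB B q).mkQ v = 0 := by
  rw [Submodule.mkQ_apply, Submodule.Quotient.mk_eq_zero]
  exact h

lemma koszulInduced_mkQ {q : ℕ} (T : Module.End ℂ V) (hT : ∀ i, Commute T (B i))
    (v : LinearMap.ker (koszulDDown B q)) :
    koszulInduced B T q ((QB B q).mkQ v)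
      = (QB B q).mkQ ⟨(T.compLeft _) v.1, by
          have h := LinearMap.congr_fun (compLeft_koszulDDown B T hT q) v.1
          simp only [LinearMap.comp_apply] at h
          have hv := v.2
          simp only [LinearMap.mem_ker] at hv ⊢
          rw [← h, hv, map_zero]⟩ := by
  rw [koszulInduced, dif_pos hT]
  rw [Submodule.mkQ_apply, Submodule.mkQ_apply, Submodule.mapQ_apply]
  congr 1

lemma dA_preserves_ker {q p' : ℕ} (hAB : ∀ i j, Commute (A i) (B j))
    (F : {s : Finset (Fin n) // s.card = p' + 1} → ({t : Finset (Fin m) // t.card = q} → V))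
    (hF : ∀ s, F s ∈ LinearMap.ker (koszulDDown B q))
    (s₀ : {s : Finset (Fin n) // s.card = p'}) :
    koszulD (fun i => (A i).compLeft {t : Finset (Fin m) // t.card = q}) p' F s₀
      ∈ LinearMap.ker (koszulDDown B q) := by
  rw [LinearMap.mem_ker, koszulD_apply, map_sum]
  refine Finset.sum_eq_zero (fun j _ => ?_)
  rw [map_smul]
  have h := LinearMap.congr_fun (compLeft_koszulDDown B (A (j : Fin n))
    (fun i => hAB _ i) q) (F ⟨insert (j : Fin n) (s₀ : Finset (Fin n)), by
      rw [Finset.card_insert_of_notMem (Finset.mem_compl.mp j.2), s₀.2]⟩)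
  simp only [LinearMap.comp_apply] at h
  rw [← h, LinearMap.mem_ker.mp (hF ⟨insert (j : Fin n) (s₀ : Finset (Fin n)), by
      rw [Finset.card_insert_of_notMem (Finset.mem_compl.mp j.2), s₀.2]⟩), map_zero, smul_zero]

lemma koszulD_induced_mkQ {q p' : ℕ} (hAB : ∀ i j, Commute (A i) (B j))
    (Y : {s : Finset (Fin n) // s.card = p' + 1} → LinearMap.ker (koszulDDown B q))
    (s₀ : {s : Finset (Fin n) // s.card = p'}) :
    koszulD (fun i => koszulInduced B (A i) q) p' (fun s => (QB B q).mkQ (Y s)) s₀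
      = (QB B q).mkQ ⟨koszulD (fun i => (A i).compLeft _) p' (fun s => (Y s).1) s₀,
          dA_preserves_ker A B hAB _ (fun s => (Y s).2) s₀⟩ := by
  rw [koszulD_apply]
  have step : ∀ j : {x // x ∈ (s₀ : Finset (Fin n))ᶜ},
      ((-1 : ℂ) ^ ((s₀ : Finset (Fin n)).filter (· < (j : Fin n))).card) •
        koszulInduced B (A (j : Fin n)) q ((QB B q).mkQ (Y ⟨insert (j : Fin n) (s₀ : Finset (Fin n)), by
          rw [Finset.card_insert_of_notMem (Finset.mem_compl.mp j.2), s₀.2]⟩))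
      = (QB B q).mkQ (((-1 : ℂ) ^ ((s₀ : Finset (Fin n)).filter (· < (j : Fin n))).card) •
          ⟨((A (j : Fin n)).compLeft _) (Y ⟨insert (j : Fin n) (s₀ : Finset (Fin n)), by
            rw [Finset.card_insert_of_notMem (Finset.mem_compl.mp j.2), s₀.2]⟩).1, by
          have h := LinearMap.congr_fun (compLeft_koszulDDown B (A (j : Fin n))
            (fun i => hAB _ i) q) (Y ⟨insert (j : Fin n) (s₀ : Finset (Fin n)), by
      rw [Finset.card_insert_of_notMem (Finset.mem_compl.mp j.2), s₀.2]⟩).1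
          simp only [LinearMap.comp_apply] at h
          have hv := (Y ⟨insert (j : Fin n) (s₀ : Finset (Fin n)), by
      rw [Finset.card_insert_of_notMem (Finset.mem_compl.mp j.2), s₀.2]⟩).2
          simp only [LinearMap.mem_ker] at hv ⊢
          rw [← h, hv, map_zero]⟩) := by
    intro j
    rw [koszulInduced_mkQ B _ (fun i => hAB _ i), map_smul]
  rw [Finset.sum_congr rfl (fun j _ => step j), ← map_sum]
  congr 1
  refine Subtype.ext ?_
  rw [AddSubmonoidClass.coe_finset_sum]
  conv_rhs => rw [Submodule.coe_mk, koszulD_apply]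
  refine Finset.sum_congr rfl (fun j _ => ?_)
  rw [SetLike.val_smul]

end Homology

section MainStep
variable {n m : ℕ}

lemma upperF_card_le (u : Finset (Fin (n + m))) : (upperF u).card ≤ m := by
  simpa using Finset.card_le_card (Finset.subset_univ (upperF u))

lemma koszulDDown_koszulD_eq_zero {N : ℕ} (C : Fin N → Module.End ℂ V)
    (hC : ∀ i j, Commute (C i) (C j)) (k : ℕ)
    (w : {u : Finset (Fin N) // u.card = k + 1} → V) :
    koszulDDown C k (koszulD C k w) = 0 := by
  cases k with
  | zero => rfl
  | succ k' => exact koszulD_sq C hC k' w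

/-- Evaluation of `koszulDDown` vanishing, in terms of an explicit sum one level down. -/
lemma koszulDDown_eval {W : Type*} [AddCommGroup W] [Module ℂ W] {N : ℕ}
    (C : Fin N → Module.End ℂ W) {q q' : ℕ} (hq : q = q' + 1)
    (v : {t : Finset (Fin N) // t.card = q} → W)
    (hv : koszulDDown C q v = 0) (t0 : {t : Finset (Fin N) // t.card = q'}) :
    ∑ j ∈ (t0 : Finset (Fin N))ᶜ.attach,
      ((-1 : ℂ) ^ ((t0 : Finset (Fin N)).filter (· < (j : Fin N))).card) •
        C (j : Fin N) (v ⟨insert (j : Fin N) (t0 : Finset (Fin N)), by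
          rw [Finset.card_insert_of_notMem (Finset.mem_compl.mp j.2), t0.2, hq]⟩) = 0 := by
  subst hq
  exact congrFun hv t0

/-- Membership in the kernel of `koszulDDown`, via explicit sums one level down. -/
lemma koszulDDown_mem_ker {W : Type*} [AddCommGroup W] [Module ℂ W] {N : ℕ}
    (C : Fin N → Module.End ℂ W) {q : ℕ}
    (v : {t : Finset (Fin N) // t.card = q} → W)
    (h : ∀ (q' : ℕ) (hq : q = q' + 1) (t0 : {t : Finset (Fin N) // t.card = q'}),
      ∑ j ∈ (t0 : Finset (Fin N))ᶜ.attach,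
        ((-1 : ℂ) ^ ((t0 : Finset (Fin N)).filter (· < (j : Fin N))).card) •
          C (j : Fin N) (v ⟨insert (j : Fin N) (t0 : Finset (Fin N)), by
            rw [Finset.card_insert_of_notMem (Finset.mem_compl.mp j.2), t0.2, hq]⟩) = 0) :
    koszulDDown C q v = 0 := by
  cases q with
  | zero => rfl
  | succ q' =>
    funext t0
    exact h q' rfl t0

variable (A : Fin n → Module.End ℂ V) (B : Fin m → Module.End ℂ V)

lemma koszulD_compLeft_apply {q p : ℕ}
    (F : {s : Finset (Fin n) // s.card = p + 1} → ({t : Finset (Fin m) // t.card = q} → V))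
    (sc : {s : Finset (Fin n) // s.card = p}) (tc : {t : Finset (Fin m) // t.card = q}) :
    koszulD (fun i => (A i).compLeft {t : Finset (Fin m) // t.card = q}) p F sc tc
      = ∑ j ∈ (sc : Finset (Fin n))ᶜ.attach,
          ((-1 : ℂ) ^ ((sc : Finset (Fin n)).filter (· < (j : Fin n))).card) •
            A (j : Fin n) (F ⟨insert (j : Fin n) (sc : Finset (Fin n)), by
              rw [Finset.card_insert_of_notMem (Finset.mem_compl.mp j.2), sc.2]⟩ tc) := by
  rw [koszulD_apply, Finset.sum_apply]
  refine Finset.sum_congr rfl (fun j _ => ?_)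
  rw [Pi.smul_apply]
  rfl

/-- The compact form of the splitting of the Koszul differential of an appended tuple. -/
lemma koszulD_append_joinF2 {p q K : ℕ} (hK : p + q = K)
    (f : {u : Finset (Fin (n + m)) // u.card = K + 1} → V)
    (s : Finset (Fin n)) (t : Finset (Fin m)) (hs : s.card = p) (ht : t.card = q) :
    koszulD (Fin.append A B) K f ⟨joinF s t, by rw [card_joinF, hs, ht, hK]⟩
      = koszulD (fun i => (A i).compLeft {t' : Finset (Fin m) // t'.card = q}) p
          (fun s' t' => f ⟨joinF (s' : Finset (Fin n)) (t' : Finset (Fin m)), by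
            rw [card_joinF, s'.2, t'.2]; omega⟩) ⟨s, hs⟩ ⟨t, ht⟩
        + (-1 : ℂ) ^ p • koszulD B q (fun t' => f ⟨joinF s (t' : Finset (Fin m)), by
            rw [card_joinF, hs, t'.2]; omega⟩) ⟨t, ht⟩ := by
  rw [koszulD_append_joinF A B hK f s t hs ht]
  congr 1
  rw [koszulD_compLeft_apply]

/-- Parametrized form of the splitting of the Koszul differential of an appended tuple. -/
lemma koszulD_append_joinF3 {p q K : ℕ} (hK : p + q = K)
    (f : {u : Finset (Fin (n + m)) // u.card = K + 1} → V)
    (FA : {s : Finset (Fin n) // s.card = p + 1} → ({t : Finset (Fin m) // t.card = q} → V))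
    (FB : {t : Finset (Fin m) // t.card = q + 1} → V)
    (s : Finset (Fin n)) (t : Finset (Fin m)) (hs : s.card = p) (ht : t.card = q)
    (hFA : ∀ s' t', FA s' t' = f ⟨joinF (s' : Finset (Fin n)) (t' : Finset (Fin m)), by
      rw [card_joinF, s'.2, t'.2]; omega⟩)
    (hFB : ∀ t', FB t' = f ⟨joinF s (t' : Finset (Fin m)), by
      rw [card_joinF, hs, t'.2]; omega⟩) :
    koszulD (Fin.append A B) K f ⟨joinF s t, by rw [card_joinF, hs, ht, hK]⟩
      = koszulD (fun i => (A i).compLeft {t' : Finset (Fin m) // t'.card = q}) p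
          FA ⟨s, hs⟩ ⟨t, ht⟩
        + (-1 : ℂ) ^ p • koszulD B q FB ⟨t, ht⟩ := by
  have hFA' : FA = fun (s' : {s : Finset (Fin n) // s.card = p + 1})
      (t' : {t : Finset (Fin m) // t.card = q}) =>
        f ⟨joinF (s' : Finset (Fin n)) (t' : Finset (Fin m)), by
          rw [card_joinF, s'.2, t'.2]; omega⟩ :=
    funext fun s' => funext fun t' => hFA s' t'
  have hFB' : FB = fun (t' : {t : Finset (Fin m) // t.card = q + 1}) =>
      f ⟨joinF s (t' : Finset (Fin m)), by
        rw [card_joinF, hs, t'.2]; omega⟩ := funext fun t' => hFB t'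
  rw [hFA', hFB']
  exact koszulD_append_joinF2 A B hK f s t hs ht

/-- Evaluating the cycle condition for the appended tuple on a joined set. -/
lemma cycle_eval {k : ℕ} (x : {u : Finset (Fin (n + m)) // u.card = k} → V)
    (hcyc : koszulDDown (Fin.append A B) k x = 0) {p q : ℕ} (hpq : p + q + 1 = k)
    (FA : {s : Finset (Fin n) // s.card = p + 1} → ({t : Finset (Fin m) // t.card = q} → V))
    (FB : {t : Finset (Fin m) // t.card = q + 1} → V)
    (s : Finset (Fin n)) (t : Finset (Fin m)) (hs : s.card = p) (ht : t.card = q)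
    (hFA : ∀ s' t', FA s' t' = x ⟨joinF (s' : Finset (Fin n)) (t' : Finset (Fin m)), by
      rw [card_joinF, s'.2, t'.2]; omega⟩)
    (hFB : ∀ t', FB t' = x ⟨joinF s (t' : Finset (Fin m)), by
      rw [card_joinF, hs, t'.2]; omega⟩) :
    koszulD (fun i => (A i).compLeft {t' : Finset (Fin m) // t'.card = q}) p
        FA ⟨s, hs⟩ ⟨t, ht⟩
      + (-1 : ℂ) ^ p • koszulD B q FB ⟨t, ht⟩ = 0 := by
  obtain ⟨K, rfl⟩ : ∃ K, k = K + 1 := ⟨p + q, by omega⟩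
  rw [← koszulD_append_joinF3 A B (show p + q = K by omega) x FA FB s t hs ht hFA hFB]
  exact congrFun hcyc ⟨joinF s t, by rw [card_joinF, hs, ht]; omega⟩

end MainStep

section Peel
variable {n m : ℕ} (A : Fin n → Module.End ℂ V) (B : Fin m → Module.End ℂ V)

set_option maxHeartbeats 2000000 in
lemma peel (hcomm : ∀ i j, Commute (Fin.append A B i) (Fin.append A B j)) (k : ℕ)
    (h : ∀ p q, p ≤ n → q ≤ m → p + q = k →
      Subsingleton (koszulHomology (fun i => koszulInduced B (A i) q) p))
    (P : ℕ) :
    ∀ (x : {u : Finset (Fin (n + m)) // u.card = k} → V),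
      koszulDDown (Fin.append A B) k x = 0 →
      (∀ u : {u : Finset (Fin (n + m)) // u.card = k},
        P ≤ (lowerF (u : Finset (Fin (n + m)))).card → x u = 0) →
      ∃ w, koszulD (Fin.append A B) k w = x := by
  have hAB : ∀ (i : Fin n) (j : Fin m), Commute (A i) (B j) := fun i j => by
    have hc := hcomm (Fin.castAdd m i) (Fin.natAdd n j)
    rwa [Fin.append_left, Fin.append_right] at hc
  induction P with
  | zero =>
    intro x hcyc hsupp
    exact ⟨0, by rw [map_zero]; funext u; exact (hsupp u (Nat.zero_le _)).symm⟩
  | succ p IH =>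
    intro x hcyc hsupp
    by_cases hex : p ≤ n ∧ p ≤ k ∧ k ≤ p + m
    case neg =>
      refine IH x hcyc (fun u hu => ?_)
      rcases Nat.lt_or_ge p (lowerF (u : Finset (Fin (n + m)))).card with hlt | hge
      · exact hsupp u hlt
      · exfalso
        have hcard := card_eq_lower_add_upper (u : Finset (Fin (n + m)))
        have h1 := lowerF_card_le (u : Finset (Fin (n + m)))
        have h2 := upperF_card_le (u : Finset (Fin (n + m)))
        have h3 := u.2
        exact hex ⟨by omega, by omega, by omega⟩
    case pos =>
      obtain ⟨hpn, hpk, hkm⟩ := hex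
      obtain ⟨q, hq⟩ : ∃ q, p + q = k := ⟨k - p, by omega⟩
      have hqm : q ≤ m := by omega
      -- the top layer of `x`
      set G : {s : Finset (Fin n) // s.card = p} → ({t : Finset (Fin m) // t.card = q} → V) :=
        fun s t => x ⟨joinF (s : Finset (Fin n)) (t : Finset (Fin m)), by
          rw [card_joinF, s.2, t.2, hq]⟩ with hGdef
      -- each `G s` is a `koszulDDown B q` cycle
      have hGker : ∀ s, G s ∈ LinearMap.ker (koszulDDown B q) := by
        intro s
        rw [LinearMap.mem_ker]
        refine koszulDDown_mem_ker B (G s) (fun q' hq' t0 => ?_)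
        have EQ := cycle_eval A B x hcyc (show p + q' + 1 = k by omega) 0
          (fun t' => x ⟨joinF (s : Finset (Fin n)) (t' : Finset (Fin m)), by
            rw [card_joinF, s.2, t'.2]; omega⟩)
          (s : Finset (Fin n)) (t0 : Finset (Fin m)) s.2 t0.2
          (fun s' t' => (hsupp ⟨joinF (s' : Finset (Fin n)) (t' : Finset (Fin m)), by
            rw [card_joinF, s'.2, t'.2]; omega⟩ (by rw [lowerF_joinF, s'.2])).symm)
          (fun t' => rfl)
        rw [map_zero] at EQ
        simp only [Pi.zero_apply, zero_add] at EQ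
        rcases smul_eq_zero.mp EQ with hc | hzero
        · exact absurd hc (pow_ne_zero _ (by norm_num))
        · exact hzero
      -- the class of the top layer is a cycle in the induced complex
      have hxiker : koszulDDown (fun i => koszulInduced B (A i) q) p
          (fun s => (QB B q).mkQ ⟨G s, hGker s⟩) = 0 := by
        refine koszulDDown_mem_ker _ _ (fun p' hp' s₀ => ?_)
        -- identify the sum with an application of `koszulD` of the induced tuple
        show koszulD (fun i => koszulInduced B (A i) q) p'
          (fun s => (QB B q).mkQ ⟨G ⟨(s : Finset (Fin n)), by rw [s.2, hp']⟩,
            hGker _⟩) s₀ = 0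
        rw [koszulD_induced_mkQ A B hAB
          (fun s => ⟨G ⟨(s : Finset (Fin n)), by rw [s.2, hp']⟩, hGker _⟩) s₀]
        refine mkQ_eq_zero_of_range B _ ?_
        -- the `A`-differential of the top layer is a `B`-boundary
        refine ⟨(-(-1 : ℂ) ^ p') • (fun (t' : {t : Finset (Fin m) // t.card = q + 1}) =>
          x ⟨joinF (s₀ : Finset (Fin n)) (t' : Finset (Fin m)), by
            rw [card_joinF, s₀.2, t'.2]; omega⟩), ?_⟩
        rw [map_smul]
        funext tc
        have EQ := cycle_eval A B x hcyc (show p' + q + 1 = k by omega)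
          (fun s' t' => G ⟨(s' : Finset (Fin n)), by rw [s'.2, hp']⟩ t')
          (fun t' => x ⟨joinF (s₀ : Finset (Fin n)) (t' : Finset (Fin m)), by
            rw [card_joinF, s₀.2, t'.2]; omega⟩)
          (s₀ : Finset (Fin n)) (tc : Finset (Fin m)) s₀.2 tc.2
          (fun s' t' => rfl) (fun t' => rfl)
        rw [Pi.smul_apply]
        have harr : ∀ (a b : V), a + (-1 : ℂ) ^ p' • b = 0 → -(-1 : ℂ) ^ p' • b = a := by
          intro a b hab
          have : a = -((-1 : ℂ) ^ p' • b) := by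
            rw [eq_neg_iff_add_eq_zero]; exact hab
          rw [this, neg_smul]
        exact harr _ _ EQ
      -- apply the vanishing hypothesis to find a primitive of the class
      have hsub := h p q hpn hqm hq
      have hzero : Submodule.Quotient.mk
          (p := Submodule.comap
            (LinearMap.ker (koszulDDown (fun i => koszulInduced B (A i) q) p)).subtype
            (LinearMap.range (koszulD (fun i => koszulInduced B (A i) q) p)))
          ⟨fun s => (QB B q).mkQ ⟨G s, hGker s⟩, LinearMap.mem_ker.mpr hxiker⟩ = 0 :=
        Subsingleton.elim _ _
      rw [Submodule.Quotient.mk_eq_zero, Submodule.mem_comap] at hzero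
      obtain ⟨Yhat, hYhat⟩ := hzero
      -- lift the primitive to cycles
      have hsurj : ∀ s' : {s : Finset (Fin n) // s.card = p + 1},
          ∃ v : LinearMap.ker (koszulDDown B q), (QB B q).mkQ v = Yhat s' := fun s' => by
        obtain ⟨v, hv⟩ := Submodule.Quotient.mk_surjective (QB B q) (Yhat s')
        exact ⟨v, by rw [Submodule.mkQ_apply]; exact hv⟩
      have hy : ∀ s', (QB B q).mkQ ((hsurj s').choose) = Yhat s' :=
        fun s' => (hsurj s').choose_spec
      -- the error terms
      have hzex : ∀ s₀ : {s : Finset (Fin n) // s.card = p},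
          ∃ zz : {t : Finset (Fin m) // t.card = q + 1} → V,
            koszulD B q zz = G s₀ - koszulD (fun i =>
              (A i).compLeft {t : Finset (Fin m) // t.card = q}) p
                (fun s' => ((hsurj s').choose : {t : Finset (Fin m) // t.card = q} → V))
                s₀ := by
        intro s₀
        have e1 : koszulD (fun i => koszulInduced B (A i) q) p
            (fun s' => (QB B q).mkQ ((hsurj s').choose)) s₀
            = (QB B q).mkQ ⟨G s₀, hGker s₀⟩ := by
          rw [show (fun s' => (QB B q).mkQ ((hsurj s').choose)) = Yhat from
            funext fun s' => hy s']
          exact congrFun hYhat s₀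
        rw [koszulD_induced_mkQ A B hAB (fun s' => (hsurj s').choose) s₀,
          Submodule.mkQ_apply, Submodule.mkQ_apply, Submodule.Quotient.eq] at e1
        rw [Submodule.mem_comap] at e1
        obtain ⟨zz, hzz⟩ := e1
        refine ⟨-zz, ?_⟩
        rw [map_neg, hzz, map_sub, neg_sub]
        rfl
      -- the correcting cochain
      obtain ⟨w, hwdef⟩ : ∃ w' : {u : Finset (Fin (n + m)) // u.card = k + 1} → V,
          w' = fun (u : {u : Finset (Fin (n + m)) // u.card = k + 1}) =>
        if hA : (lowerF (u : Finset (Fin (n + m)))).card = p + 1 then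
          ((hsurj ⟨lowerF (u : Finset (Fin (n + m))), hA⟩).choose :
            {t : Finset (Fin m) // t.card = q} → V)
            ⟨upperF (u : Finset (Fin (n + m))), by
              have h1 := card_eq_lower_add_upper (u : Finset (Fin (n + m)))
              have h2 := u.2
              omega⟩
        else if hA' : (lowerF (u : Finset (Fin (n + m)))).card = p then
          (-1 : ℂ) ^ p • (hzex ⟨lowerF (u : Finset (Fin (n + m))), hA'⟩).choose
            ⟨upperF (u : Finset (Fin (n + m))), by
              have h1 := card_eq_lower_add_upper (u : Finset (Fin (n + m)))
              have h2 := u.2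
              omega⟩
        else 0 := ⟨_, rfl⟩
      have hw1 : ∀ (s' : {s : Finset (Fin n) // s.card = p + 1})
          (t' : {t : Finset (Fin m) // t.card = q})
          (pf : (joinF (s' : Finset (Fin n)) (t' : Finset (Fin m))).card = k + 1),
          w ⟨joinF (s' : Finset (Fin n)) (t' : Finset (Fin m)), pf⟩
            = ((hsurj s').choose : {t : Finset (Fin m) // t.card = q} → V) t' := by
        intro s' t' pf
        rw [hwdef]
        beta_reduce
        rw [dif_pos (show (lowerF (joinF (s' : Finset (Fin n))
          (t' : Finset (Fin m)))).card = p + 1 by rw [lowerF_joinF]; exact s'.2)]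
        have happ : ∀ (a b : {s : Finset (Fin n) // s.card = p + 1})
            (c d : {t : Finset (Fin m) // t.card = q}), a = b → c = d →
            ((hsurj a).choose : {t : Finset (Fin m) // t.card = q} → V) c
              = ((hsurj b).choose : {t : Finset (Fin m) // t.card = q} → V) d := by
          rintro a b c d rfl rfl; rfl
        exact happ _ s' _ t' (Subtype.ext (lowerF_joinF _ _)) (Subtype.ext (upperF_joinF _ _))
      have hw2 : ∀ (s' : {s : Finset (Fin n) // s.card = p})
          (t' : {t : Finset (Fin m) // t.card = q + 1})
          (pf : (joinF (s' : Finset (Fin n)) (t' : Finset (Fin m))).card = k + 1),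
          w ⟨joinF (s' : Finset (Fin n)) (t' : Finset (Fin m)), pf⟩
            = (-1 : ℂ) ^ p • (hzex s').choose t' := by
        intro s' t' pf
        rw [hwdef]
        beta_reduce
        rw [dif_neg (show ¬ (lowerF (joinF (s' : Finset (Fin n))
            (t' : Finset (Fin m)))).card = p + 1 by rw [lowerF_joinF, s'.2]; omega)]
        rw [dif_pos (show (lowerF (joinF (s' : Finset (Fin n))
          (t' : Finset (Fin m)))).card = p by rw [lowerF_joinF]; exact s'.2)]
        have happ : ∀ (a b : {s : Finset (Fin n) // s.card = p})
            (c d : {t : Finset (Fin m) // t.card = q + 1}), a = b → c = d →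
            (-1 : ℂ) ^ p • (hzex a).choose c = (-1 : ℂ) ^ p • (hzex b).choose d := by
          rintro a b c d rfl rfl; rfl
        exact happ _ s' _ t' (Subtype.ext (lowerF_joinF _ _)) (Subtype.ext (upperF_joinF _ _))
      have hw3 : ∀ (u : {u : Finset (Fin (n + m)) // u.card = k + 1}),
          (lowerF (u : Finset (Fin (n + m)))).card ≠ p + 1 →
          (lowerF (u : Finset (Fin (n + m)))).card ≠ p → w u = 0 := by
        intro u h1 h2
        rw [hwdef]
        beta_reduce
        rw [dif_neg h1, dif_neg h2]
      -- the boundary of `w` matches `x` on all layers of `A`-degree at least `p`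
      have hdw : ∀ u : {u : Finset (Fin (n + m)) // u.card = k},
          p ≤ (lowerF (u : Finset (Fin (n + m)))).card →
          koszulD (Fin.append A B) k w u = x u := by
        intro u hu
        have hcard := card_eq_lower_add_upper (u : Finset (Fin (n + m)))
        have hu2 := u.2
        have hupm := upperF_card_le (u : Finset (Fin (n + m)))
        have hpt : u = ⟨joinF (lowerF (u : Finset (Fin (n + m))))
            (upperF (u : Finset (Fin (n + m)))), by
          rw [joinF_lowerF_upperF]; exact u.2⟩ :=
          Subtype.ext (joinF_lowerF_upperF _).symm
        rw [hpt]
        by_cases hr1 : (lowerF (u : Finset (Fin (n + m)))).card = p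
        · -- main layer
          have hup : (upperF (u : Finset (Fin (n + m)))).card = q := by omega
          rw [koszulD_append_joinF3 A B hq w
            (fun s' => ((hsurj s').choose : {t : Finset (Fin m) // t.card = q} → V))
            ((-1 : ℂ) ^ p • (hzex ⟨lowerF (u : Finset (Fin (n + m))), hr1⟩).choose)
            (lowerF (u : Finset (Fin (n + m)))) (upperF (u : Finset (Fin (n + m)))) hr1 hup
            (fun s' t' => (hw1 s' t' _).symm)
            (fun t' => (hw2 ⟨lowerF (u : Finset (Fin (n + m))), hr1⟩ t' _).symm)]
          rw [map_smul, Pi.smul_apply, smul_smul,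
            show ((-1 : ℂ)) ^ p * ((-1 : ℂ)) ^ p = 1 by
              rw [← pow_add]; exact Even.neg_one_pow ⟨p, rfl⟩,
            one_smul, (hzex ⟨lowerF (u : Finset (Fin (n + m))), hr1⟩).choose_spec,
            Pi.sub_apply, add_sub_cancel]
        · by_cases hr2 : (lowerF (u : Finset (Fin (n + m)))).card = p + 1
          · -- layer `p+1` : both sides vanish
            have hq1 : q = (upperF (u : Finset (Fin (n + m)))).card + 1 := by omega
            rw [koszulD_append_joinF3 A B
              (show (p + 1) + (upperF (u : Finset (Fin (n + m)))).card = k by omega) w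
              0
              (fun t' => ((hsurj ⟨lowerF (u : Finset (Fin (n + m))), hr2⟩).choose :
                {t : Finset (Fin m) // t.card = q} → V)
                  ⟨(t' : Finset (Fin m)), by have := t'.2; omega⟩)
              (lowerF (u : Finset (Fin (n + m)))) (upperF (u : Finset (Fin (n + m)))) hr2 rfl
              (fun s' t' => (hw3 ⟨joinF (s' : Finset (Fin n)) (t' : Finset (Fin m)), by
                  rw [card_joinF, s'.2, t'.2]; omega⟩
                (by rw [lowerF_joinF, s'.2]; omega)
                (by rw [lowerF_joinF, s'.2]; omega)).symm)
              (fun t' => (hw1 ⟨lowerF (u : Finset (Fin (n + m))), hr2⟩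
                ⟨(t' : Finset (Fin m)), by have := t'.2; omega⟩ _).symm)]
            have hB0 : koszulD B ((upperF (u : Finset (Fin (n + m)))).card)
                (fun t' => ((hsurj ⟨lowerF (u : Finset (Fin (n + m))), hr2⟩).choose :
                  {t : Finset (Fin m) // t.card = q} → V)
                    ⟨(t' : Finset (Fin m)), by have := t'.2; omega⟩)
                ⟨upperF (u : Finset (Fin (n + m))), rfl⟩ = 0 :=
              koszulDDown_eval B hq1
                ((hsurj ⟨lowerF (u : Finset (Fin (n + m))), hr2⟩).choose :
                  {t : Finset (Fin m) // t.card = q} → V)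
                (LinearMap.mem_ker.mp
                  ((hsurj ⟨lowerF (u : Finset (Fin (n + m))), hr2⟩).choose).2)
                ⟨upperF (u : Finset (Fin (n + m))), rfl⟩
            rw [map_zero, hB0, smul_zero, add_zero]
            rw [hsupp ⟨joinF (lowerF (u : Finset (Fin (n + m))))
                (upperF (u : Finset (Fin (n + m)))), by
                  rw [joinF_lowerF_upperF]; exact u.2⟩
              (by rw [lowerF_joinF]; omega)]
            rfl
          · -- higher layers : both sides vanish
            have hr3 : p + 2 ≤ (lowerF (u : Finset (Fin (n + m)))).card := by omega
            rw [koszulD_append_joinF3 A B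
              (show (lowerF (u : Finset (Fin (n + m)))).card
                + (upperF (u : Finset (Fin (n + m)))).card = k by omega) w
              0 0
              (lowerF (u : Finset (Fin (n + m)))) (upperF (u : Finset (Fin (n + m)))) rfl rfl
              (fun s' t' => (hw3 ⟨joinF (s' : Finset (Fin n)) (t' : Finset (Fin m)), by
                  rw [card_joinF, s'.2, t'.2]; omega⟩
                (by rw [lowerF_joinF, s'.2]; omega)
                (by rw [lowerF_joinF, s'.2]; omega)).symm)
              (fun t' => (hw3 ⟨joinF (lowerF (u : Finset (Fin (n + m))))
                  (t' : Finset (Fin m)), by rw [card_joinF, t'.2]; omega⟩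
                (by rw [lowerF_joinF]; omega)
                (by rw [lowerF_joinF]; omega)).symm)]
            rw [map_zero, map_zero]
            simp only [Pi.zero_apply, zero_add, smul_zero, add_zero]
            rw [hsupp ⟨joinF (lowerF (u : Finset (Fin (n + m))))
                (upperF (u : Finset (Fin (n + m)))), by
                  rw [joinF_lowerF_upperF]; exact u.2⟩
              (by rw [lowerF_joinF]; omega)]
      -- subtract the boundary and recurse
      have hcyc2 : koszulDDown (Fin.append A B) k (x - koszulD (Fin.append A B) k w) = 0 := by
        rw [map_sub, hcyc, koszulDDown_koszulD_eq_zero (Fin.append A B) hcomm k w, sub_zero]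
      have hsupp2 : ∀ u : {u : Finset (Fin (n + m)) // u.card = k},
          p ≤ (lowerF (u : Finset (Fin (n + m)))).card →
          (x - koszulD (Fin.append A B) k w) u = 0 := fun u hu => by
        rw [Pi.sub_apply, hdw u hu, sub_self]
      obtain ⟨w2, hw2'⟩ := IH (x - koszulD (Fin.append A B) k w) hcyc2 hsupp2
      refine ⟨w + w2, ?_⟩
      rw [map_add, hw2']
      abel

end Peel

/-- If `A ⊕ B` is a commuting `(n+m)`-tuple and all the Koszul homology groups
`H_p(A, H_q(B,V))` with `p + q = k` vanish, then `H_k(A ⊕ B, V)` vanishes. -/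
theorem trivial_homology_of_trivial_E2
    {V : Type*} [AddCommGroup V] [Module ℂ V] {n m : ℕ}
    (A : Fin n → Module.End ℂ V) (B : Fin m → Module.End ℂ V)
    (hcomm : ∀ i j, Commute (Fin.append A B i) (Fin.append A B j))
    (k : ℕ) (hk : k ≤ n + m)
    (h : ∀ p q, p ≤ n → q ≤ m → p + q = k →
      Subsingleton (koszulHomology (fun i => koszulInduced B (A i) q) p)) :
    Subsingleton (koszulHomology (Fin.append A B) k) := by
  have hzero : ∀ a : koszulHomology (Fin.append A B) k, a = 0 := by
    intro a
    obtain ⟨⟨x, hx⟩, rfl⟩ := Submodule.Quotient.mk_surjective _ a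
    rw [Submodule.Quotient.mk_eq_zero, Submodule.mem_comap]
    obtain ⟨w, hw⟩ := peel A B hcomm k h (n + 1) x (LinearMap.mem_ker.mp hx)
      (fun u hu => absurd hu (by
        have := lowerF_card_le (u : Finset (Fin (n + m)))
        omega))
    exact ⟨w, hw⟩
  exact ⟨fun a b => (hzero a).trans (hzero b).symm⟩

end KN
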